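/- Let (W, S) be a Coxeter system and T ⊂ S. Let s_1^{ε_1} ⋯ s_ℓ^{ε_ℓ} be a word with s_i ∈ S and ε_i ∈ {±1}. For 0 ≤ i ≤ ℓ set u_i = s_1 s_2 ⋯ s_i ∈ W, and write u_i = v_i w_i with v_i ∈ W_T and w_i the (T,∅)-minimal element of W_T u_i. For 1 ≤ i ≤ ℓ define t_i = w_{i-1} s_i w_{i-1}^{-1} if ε_i = 1, and t_i = w_i s_i w_i^{-1} if ε_i = −1. If t_i ∈ T for all i ∈ {1, …, ℓ}, then s_i ∈ T for all i ∈ {1, …, ℓ}. -/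

import Mathlib

/-!
Statement 13: Let (W, S) be a Coxeter system and T ⊆ S.  Let s_1^{ε_1} ⋯ s_ℓ^{ε_ℓ} be a word
with s_i ∈ S and ε_i ∈ {±1}.  For 0 ≤ i ≤ ℓ set u_i = s_1 s_2 ⋯ s_i ∈ W, and write
u_i = v_i w_i with v_i ∈ W_T and w_i the (T,∅)-minimal element of W_T u_i.  For 1 ≤ i ≤ ℓ
define t_i = w_{i-1} s_i w_{i-1}⁻¹ if ε_i = 1, and t_i = w_i s_i w_i⁻¹ if ε_i = −1.
If t_i ∈ T for all i ∈ {1, …, ℓ}, then s_i ∈ T for all i ∈ {1, …, ℓ}.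

The word is encoded as a list `ω` of pairs `(s, ε)` with `ε : Bool` (`true` for exponent +1);
the i-th (0-based) letter corresponds to the (i+1)-st letter of the paper, so that
`u_i = cs.wordProd ((ω.take i).map Prod.fst)`, and "t_i ∈ T" means that `t_i ∈ W` is a simple
reflection indexed by an element of `T`.
-/

set_option maxHeartbeats 1000000

open CoxeterSystem
noncomputable section
namespace Stmt13
variable {B : Type*} (M : CoxeterMatrix B)

def kk (a b : B) : ℝ := -Real.cos (Real.pi / M a b)

lemma kk_diag (a : B) : kk M a a = 1 := by
  simp [kk, M.diagonal a]

lemma kk_symm (a b : B) : kk M a b = kk M b a := by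
  simp [kk, M.symmetric a b]

def ff (a : B) : (B →₀ ℝ) →ₗ[ℝ] ℝ := Finsupp.linearCombination ℝ (kk M a)

def sig (a : B) : Module.End ℝ (B →₀ ℝ) :=
  LinearMap.id - (2 : ℝ) • (ff M a).smulRight (Finsupp.single a 1)

lemma sig_apply (a : B) (x : B →₀ ℝ) :
    sig M a x = x - (2 * ff M a x) • Finsupp.single a 1 := by
  simp [sig, mul_smul]

lemma ff_single (a b : B) : ff M a (Finsupp.single b 1) = kk M a b := by
  simp [ff]

lemma ff_sig (a' a : B) (x : B →₀ ℝ) :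
    ff M a' (sig M a x) = ff M a' x - 2 * ff M a x * kk M a' a := by
  simp only [sig_apply, map_sub, LinearMap.map_smul, smul_eq_mul, ff_single]

lemma sig_sig (a : B) (x : B →₀ ℝ) : sig M a (sig M a x) = x := by
  rw [sig_apply M a (sig M a x), ff_sig, kk_diag, sig_apply]
  module

private lemma trigA (c s CX SX A Bv : ℝ) (hcs : c^2+s^2=1) (hs : s ≠ 0) :
    A * (CX*(2*c^2-1) - SX*(2*s*c)) - ((c*A+Bv)/s) * (SX*(2*c^2-1) + CX*(2*s*c))
      = -(A*CX - ((c*A+Bv)/s)*SX) - 2*c*(Bv*CX + ((A+c*Bv)/s)*SX) := by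
  field_simp
  linear_combination (-2*A*c*SX) * hcs

private lemma trigB (c s CX SX A Bv : ℝ) (hcs : c^2+s^2=1) (hs : s ≠ 0) :
    Bv * (CX*(2*c^2-1) - SX*(2*s*c)) + ((A+c*Bv)/s) * (SX*(2*c^2-1) + CX*(2*s*c))
      = 2*c*(A*CX - ((c*A+Bv)/s)*SX) + (4*c^2-1)*(Bv*CX + ((A+c*Bv)/s)*SX) := by
  field_simp
  linear_combination (-2*Bv*c*SX) * hcs

lemma isLiftable : M.IsLiftable (sig M) := by
  intro a b
  rcases eq_or_ne a b with rfl | hab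
  · rw [M.diagonal, pow_one]
    refine LinearMap.ext fun x => ?_
    exact sig_sig M a x
  rcases Nat.eq_zero_or_pos (M a b) with h0 | hpos
  · rw [h0, pow_zero]
  have hm2 : 2 ≤ M a b := by
    have := M.off_diagonal a b hab; omega
  obtain ⟨m, hm⟩ : ∃ m : ℕ, M a b = m := ⟨M a b, rfl⟩
  rw [hm] at hm2 ⊢
  set θ := Real.pi / m with hθ
  set c := Real.cos θ with hc
  set s := Real.sin θ with hsdef
  have hθpos : 0 < θ := by
    rw [hθ]; positivity
  have hθlt : θ < Real.pi :=
    div_lt_self Real.pi_pos (by exact_mod_cast hm2.trans_lt' one_lt_two)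
  have hs : 0 < s := Real.sin_pos_of_pos_of_lt_pi hθpos hθlt
  have hcs : c ^ 2 + s ^ 2 = 1 := by rw [hc, hsdef]; exact Real.cos_sq_add_sin_sq θ
  have hkab : kk M a b = -c := by rw [kk, hm]
  have hkba : kk M b a = -c := by rw [← kk_symm]; exact hkab
  have hcos2 : Real.cos (2*θ) = 2*c^2-1 := by rw [Real.cos_two_mul, hc]
  have hsin2 : Real.sin (2*θ) = 2*s*c := by rw [Real.sin_two_mul, hc, hsdef]; try ring
  refine LinearMap.ext fun x => ?_
  show ((sig M a * sig M b) ^ m) x = x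
  set A := ff M a x with hA
  set Bv := ff M b x with hBv
  set Ak : ℕ → ℝ := fun k => A * Real.cos (2*k*θ) - ((c*A+Bv)/s) * Real.sin (2*k*θ) with hAk
  set Bk : ℕ → ℝ := fun k => Bv * Real.cos (2*k*θ) + ((A+c*Bv)/s) * Real.sin (2*k*θ) with hBk
  have recA : ∀ k : ℕ, Ak (k+1) = -Ak k - 2*c*Bk k := by
    intro k
    have h1 : (2*((k:ℝ)+1)*θ) = 2*k*θ + 2*θ := by ring
    rw [hAk, hBk]
    push_cast
    rw [h1, Real.cos_add, Real.sin_add, hcos2, hsin2]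
    exact trigA c s _ _ A Bv hcs hs.ne'
  have recB : ∀ k : ℕ, Bk (k+1) = 2*c*Ak k + (4*c^2-1)*Bk k := by
    intro k
    have h1 : (2*((k:ℝ)+1)*θ) = 2*k*θ + 2*θ := by ring
    rw [hAk, hBk]
    push_cast
    rw [h1, Real.cos_add, Real.sin_add, hcos2, hsin2]
    exact trigB c s _ _ A Bv hcs hs.ne'
  have key : ∀ k : ℕ,
      ((sig M a * sig M b) ^ k) x
        = x + (-2 * ∑ l ∈ Finset.range k, (Ak l + 2*c*Bk l)) • Finsupp.single a 1
            + (-2 * ∑ l ∈ Finset.range k, Bk l) • Finsupp.single b 1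
      ∧ ff M a (((sig M a * sig M b) ^ k) x) = Ak k
      ∧ ff M b (((sig M a * sig M b) ^ k) x) = Bk k := by
    intro k
    induction k with
    | zero =>
      refine ⟨by simp, ?_, ?_⟩
      · simp [hAk, ← hA]
      · simp [hBk, ← hBv]
    | succ k ih =>
      obtain ⟨hy, hfa, hfb⟩ := ih
      set y := ((sig M a * sig M b) ^ k) x with hydef
      have hpow : ((sig M a * sig M b) ^ (k+1)) x = sig M a (sig M b y) := by
        rw [pow_succ']
        rfl
      have hfab : ff M a (sig M b y) = Ak k + 2*c*Bk k := by
        rw [ff_sig, hfa, hfb, hkab]; ring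
      have hfbb : ff M b (sig M b y) = -Bk k := by
        rw [ff_sig, hfb, kk_diag]; ring
      have hstep : sig M a (sig M b y)
          = y - (2 * (Ak k + 2*c*Bk k)) • Finsupp.single a 1
              - (2 * Bk k) • Finsupp.single b 1 := by
        rw [sig_apply M a (sig M b y), hfab, sig_apply M b y, hfb]
        module
      refine ⟨?_, ?_, ?_⟩
      · rw [hpow, hstep, hy, Finset.sum_range_succ, Finset.sum_range_succ]
        module
      · rw [hpow, recA, ff_sig, hfab, kk_diag]; ring
      · rw [hpow, recB, ff_sig, hfbb, hfab, hkba]; ring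
  have hm0 : (m:ℝ) ≠ 0 := by positivity
  have h2m : 2*(m:ℝ)*θ = 2*Real.pi := by
    rw [hθ]; field_simp
  have hAm : Ak m = Ak 0 := by
    rw [hAk]; simp [h2m]
  have hBm : Bk m = Bk 0 := by
    rw [hBk]; simp [h2m]
  set SA := ∑ l ∈ Finset.range m, Ak l with hSA
  set SB := ∑ l ∈ Finset.range m, Bk l with hSB
  have shiftA : ∑ l ∈ Finset.range m, Ak (l+1) = SA := by
    have h1 := Finset.sum_range_succ' Ak m
    have h2 := Finset.sum_range_succ Ak m
    rw [h1] at h2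
    have : Ak m = Ak 0 := hAm
    rw [hSA]; linarith
  have shiftB : ∑ l ∈ Finset.range m, Bk (l+1) = SB := by
    have h1 := Finset.sum_range_succ' Bk m
    have h2 := Finset.sum_range_succ Bk m
    rw [h1] at h2
    rw [hSB]; linarith [hBm]
  have e1 : SA = -SA - 2*c*SB := by
    calc SA = ∑ l ∈ Finset.range m, Ak (l+1) := shiftA.symm
    _ = ∑ l ∈ Finset.range m, (-Ak l - 2*c*Bk l) := Finset.sum_congr rfl (fun l _ => recA l)
    _ = -SA - 2*c*SB := by
        rw [hSA, hSB, Finset.sum_sub_distrib, Finset.sum_neg_distrib, ← Finset.mul_sum]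
  have e2 : SB = 2*c*SA + (4*c^2-1)*SB := by
    calc SB = ∑ l ∈ Finset.range m, Bk (l+1) := shiftB.symm
    _ = ∑ l ∈ Finset.range m, (2*c*Ak l + (4*c^2-1)*Bk l) := Finset.sum_congr rfl (fun l _ => recB l)
    _ = 2*c*SA + (4*c^2-1)*SB := by
        rw [hSA, hSB, Finset.sum_add_distrib, ← Finset.mul_sum, ← Finset.mul_sum]
  have hSB0 : SB = 0 := by
    have h3 : 2 * s^2 * SB = 0 := by linear_combination e2 + c * e1 + 2*SB*hcs
    exact (mul_eq_zero.mp h3).resolve_left (by positivity)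
  have hSA0 : SA = 0 := by
    rw [hSB0] at e1; linarith
  obtain ⟨hy, -, -⟩ := key m
  have hsum1 : ∑ l ∈ Finset.range m, (Ak l + 2*c*Bk l) = 0 := by
    rw [Finset.sum_add_distrib, ← Finset.mul_sum, ← hSA, ← hSB, hSA0, hSB0]; ring
  have hsum2 : ∑ l ∈ Finset.range m, Bk l = 0 := by rw [← hSB]; exact hSB0
  rw [hy, hsum1, hsum2]
  simp

lemma simple_injective {W : Type*} [Group W] (cs : CoxeterSystem M W) :
    Function.Injective cs.simple := by
  intro i j hij
  by_contra hne
  have h : sig M i = sig M j := by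
    calc sig M i = cs.lift ⟨sig M, isLiftable M⟩ (cs.simple i) :=
          (cs.lift_apply_simple (isLiftable M) i).symm
    _ = cs.lift ⟨sig M, isLiftable M⟩ (cs.simple j) := by rw [hij]
    _ = sig M j := cs.lift_apply_simple (isLiftable M) j
  have h2 := congrArg (fun g : Module.End ℝ (B →₀ ℝ) => (g (Finsupp.single i 1)) i) h
  simp only [sig_apply, ff_single, kk_diag, Finsupp.sub_apply, Finsupp.smul_apply,
    Finsupp.single_eq_same, smul_eq_mul] at h2
  rw [Finsupp.single_eq_of_ne' (Ne.symm hne)] at h2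
  norm_num at h2

end Stmt13
end

open CoxeterSystem

theorem letters_mem_of_proj_mem {B W : Type*} [Group W]
    (M : CoxeterMatrix B) (cs : CoxeterSystem M W) (T : Set B)
    (ω : List (B × Bool)) (v w : ℕ → W)
    (hdec : ∀ i ≤ ω.length, cs.wordProd ((ω.take i).map Prod.fst) = v i * w i)
    (hv : ∀ i ≤ ω.length, v i ∈ Subgroup.closure (cs.simple '' T))
    (hw : ∀ i ≤ ω.length, ∀ x ∈ Subgroup.closure (cs.simple '' T),
      cs.length (w i) ≤ cs.length (x * w i))
    (ht : ∀ j : Fin ω.length,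
      (if (ω.get j).2 then w (j : ℕ) * cs.simple (ω.get j).1 * (w (j : ℕ))⁻¹
        else w ((j : ℕ) + 1) * cs.simple (ω.get j).1 * (w ((j : ℕ) + 1))⁻¹)
        ∈ cs.simple '' T) :
    ∀ j : Fin ω.length, (ω.get j).1 ∈ T := by
  classical
  have hinj : Function.Injective cs.simple := Stmt13.simple_injective M cs
  set H := Subgroup.closure (cs.simple '' T) with hH
  have hsmem : ∀ {b : B}, b ∈ T → cs.simple b ∈ H := fun hb =>
    Subgroup.subset_closure ⟨_, hb, rfl⟩
  have hkey : ∀ i ≤ ω.length, w i ∈ H → w i = 1 := by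
    intro i hi hwi
    have h := hw i hi (w i)⁻¹ (inv_mem hwi)
    rw [inv_mul_cancel] at h
    rw [← cs.length_eq_zero_iff]
    simpa using h
  have hvw : ∀ i ≤ ω.length, w i = 1 → v i = cs.wordProd ((ω.take i).map Prod.fst) := by
    intro i hi hwi
    rw [hdec i hi, hwi, mul_one]
  have hustep : ∀ n : ℕ, ∀ hn : n < ω.length,
      cs.wordProd ((ω.take (n+1)).map Prod.fst)
        = cs.wordProd ((ω.take n).map Prod.fst) * cs.simple (ω.get ⟨n, hn⟩).1 := by
    intro n hn
    have h1 : ω.take (n+1) = ω.take n ++ [ω.get ⟨n, hn⟩] := by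
      rw [List.take_succ]
      congr 1
      rw [List.getElem?_eq_getElem hn]
      rfl
    rw [h1, List.map_append, cs.wordProd_append]
    simp
  have main : ∀ i, i ≤ ω.length →
      w i = 1 ∧ ∀ j : Fin ω.length, (j : ℕ) < i → (ω.get j).1 ∈ T := by
    intro i
    induction i with
    | zero =>
      intro _
      refine ⟨?_, fun j hj => absurd hj (by omega)⟩
      apply hkey 0 (by omega)
      have h := hdec 0 (by omega)
      simp only [List.take_zero, List.map_nil, cs.wordProd_nil] at h
      have h0 : w 0 = (v 0)⁻¹ * (v 0 * w 0) := by group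
      rw [← h, mul_one] at h0
      rw [h0]
      exact inv_mem (hv 0 (by omega))
    | succ n ih =>
      intro hn1
      have hn : n ≤ ω.length := by omega
      obtain ⟨hwn, hprev⟩ := ih hn
      have hnlt : n < ω.length := by omega
      set jn : Fin ω.length := ⟨n, hnlt⟩ with hjn
      set sn := (ω.get jn).1 with hsn
      have hu : v (n+1) * w (n+1) = v n * cs.simple sn := by
        rw [← hdec (n+1) hn1, hustep n hnlt, hdec n hn, hwn, mul_one]
      have htj := ht jn
      have hval : (jn : ℕ) = n := rfl
      rw [hval] at htj
      have hstep : sn ∈ T ∧ w (n+1) = 1 := by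
        by_cases hb : (ω.get jn).2
        · rw [if_pos hb] at htj
          rw [hwn] at htj
          simp only [one_mul, inv_one, mul_one] at htj
          obtain ⟨b, hbT, hbs⟩ := htj
          have hb2 : b = sn := hinj hbs
          have hsnT : sn ∈ T := hb2 ▸ hbT
          refine ⟨hsnT, ?_⟩
          apply hkey (n+1) hn1
          have : w (n+1) = (v (n+1))⁻¹ * (v n * cs.simple sn) := by
            rw [← hu]; group
          rw [this]
          exact mul_mem (inv_mem (hv (n+1) hn1)) (mul_mem (hv n hn) (hsmem hsnT))
        · rw [if_neg hb] at htj
          obtain ⟨b, hbT, hbs⟩ := htj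
          have htH : w (n+1) * cs.simple sn * (w (n+1))⁻¹ ∈ H := by
            rw [← hbs] at *
            exact hsmem hbT
          have hwH : w (n+1) ∈ H := by
            have hs_eq : cs.simple sn = (v n)⁻¹ * (v (n+1) * w (n+1)) := by
              rw [hu]; group
            have h2 : w (n+1) * cs.simple sn * (w (n+1))⁻¹
                = w (n+1) * (v n)⁻¹ * v (n+1) := by
              rw [hs_eq]; group
            have h3 : w (n+1) = (w (n+1) * cs.simple sn * (w (n+1))⁻¹) * (v (n+1))⁻¹ * v n := by
              rw [h2]; group
            rw [h3]
            exact mul_mem (mul_mem htH (inv_mem (hv (n+1) hn1))) (hv n hn)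
          have hw1 : w (n+1) = 1 := hkey (n+1) hn1 hwH
          rw [hw1] at hbs
          simp only [one_mul, inv_one, mul_one] at hbs
          have hb2 : b = sn := hinj hbs
          exact ⟨hb2 ▸ hbT, hw1⟩
      refine ⟨hstep.2, fun j hj => ?_⟩
      rcases Nat.lt_or_ge (j : ℕ) n with h | h
      · exact hprev j h
      · have : j = jn := by
          apply Fin.ext
          omega
        rw [this]
        exact hstep.1
  intro j
  exact (main ω.length le_rfl).2 j j.isLt
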